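/- arXiv:1802.09834 — 3 statements merged into one kernel-verified Lean document; each statement's English description precedes it below -/
import Mathlib

section
/- Let K ≥ 1, and for each k = 0,…,K−1 let D_k be an n×n real diagonal matrix all of whose diagonal entries lie in [−1,1], and let W_k be a d×d real matrix with nonnegative diagonal entries ((W_k)_{ii} ≥ 0 for all i). If s := ∑_{k=0}^{K−1} ‖W_k‖_∞ < 1, then the matrix M = I − ∑_{k=0}^{K−1} W_k ⊗ D_k is strictly diagonally dominant by rows: for every row index (i,r), |1 − ∑_{k} (W_k)_{ii} (D_k)_{rr}| > ∑_{(j,s) ≠ (i,r)} |M_{(i,r),(j,s)}|. -/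
open scoped Kronecker

/-- The ℓ∞–ℓ∞ operator norm of a real matrix: the maximum over rows of the
sum of absolute values of the entries in that row. -/
noncomputable def infNorm {m n : Type*} [Fintype m] [Fintype n]
    (A : Matrix m n ℝ) : ℝ :=
  ⨆ i, ∑ j, |A i j|

lemma rowSum_le_infNorm {m n : Type*} [Fintype m] [Fintype n]
    (A : Matrix m n ℝ) (i : m) : ∑ j, |A i j| ≤ infNorm A :=
  le_ciSup (f := fun i => ∑ j, |A i j|) (Set.Finite.bddAbove (Set.finite_range _)) i

/-- If each `D k` is diagonal with diagonal entries in `[-1,1]`, each `W k` has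
nonnegative diagonal entries, and `∑ k, ‖W k‖_∞ < 1`, then
`M = I - ∑ k, W k ⊗ₖ D k` is strictly diagonally dominant by rows. -/
theorem id_sub_kronecker_sum_strictly_diag_dominant {K n d : ℕ} (hK : 1 ≤ K)
    (D : Fin K → Matrix (Fin n) (Fin n) ℝ)
    (W : Fin K → Matrix (Fin d) (Fin d) ℝ)
    (hDdiag : ∀ k, (D k).IsDiag)
    (hDbound : ∀ k r, D k r r ∈ Set.Icc (-1 : ℝ) 1)
    (hWdiag : ∀ k i, 0 ≤ W k i i)
    (hW : ∑ k, infNorm (W k) < 1) :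
    ∀ (i : Fin d) (r : Fin n),
      |1 - ∑ k, W k i i * D k r r| >
        ∑ p ∈ Finset.univ.erase (i, r),
          |((1 : Matrix (Fin d × Fin n) (Fin d × Fin n) ℝ) - ∑ k, W k ⊗ₖ D k) (i, r) p| := by
  intro i r
  have hDrr : ∀ k, |D k r r| ≤ 1 := fun k => abs_le.mpr ⟨(hDbound k r).1, (hDbound k r).2⟩
  have hWii_le : ∀ k, W k i i ≤ ∑ j, |W k i j| := fun k =>
    (le_abs_self _).trans
      (Finset.single_le_sum (f := fun j => |W k i j|) (fun j _ => abs_nonneg _)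
        (Finset.mem_univ i))
  have hDsum : ∀ k, ∑ s, |D k r s| = |D k r r| := by
    intro k
    refine Finset.sum_eq_single r (fun s _ hs => ?_) (fun h => absurd (Finset.mem_univ r) h)
    rw [(hDdiag k) (Ne.symm hs), abs_zero]
  -- entry formula at off-diagonal positions
  have hentry : ∀ p : Fin d × Fin n, p ≠ (i, r) →
      |((1 : Matrix (Fin d × Fin n) (Fin d × Fin n) ℝ) - ∑ k, W k ⊗ₖ D k) (i, r) p|
        = |∑ k, W k i p.1 * D k r p.2| := by
    intro p hp
    have : ((1 : Matrix (Fin d × Fin n) (Fin d × Fin n) ℝ) - ∑ k, W k ⊗ₖ D k) (i, r) p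
        = -(∑ k, W k i p.1 * D k r p.2) := by
      obtain ⟨j, s⟩ := p
      simp [Matrix.sub_apply, Matrix.sum_apply, Matrix.one_apply_ne' hp,
        Matrix.kroneckerMap_apply]
    rw [this, abs_neg]
  -- bound the off-diagonal row sum
  have hRHS : ∑ p ∈ Finset.univ.erase (i, r),
      |((1 : Matrix (Fin d × Fin n) (Fin d × Fin n) ℝ) - ∑ k, W k ⊗ₖ D k) (i, r) p|
      ≤ ∑ k, (infNorm (W k) - W k i i) := by
    calc ∑ p ∈ Finset.univ.erase (i, r),
        |((1 : Matrix (Fin d × Fin n) (Fin d × Fin n) ℝ) - ∑ k, W k ⊗ₖ D k) (i, r) p|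
        ≤ ∑ p ∈ Finset.univ.erase (i, r), ∑ k, |W k i p.1| * |D k r p.2| := by
          refine Finset.sum_le_sum fun p hp => ?_
          rw [hentry p (Finset.ne_of_mem_erase hp)]
          exact (Finset.abs_sum_le_sum_abs _ _).trans
            (le_of_eq (Finset.sum_congr rfl fun k _ => abs_mul _ _))
      _ = ∑ k, ∑ p ∈ Finset.univ.erase (i, r), |W k i p.1| * |D k r p.2| :=
          Finset.sum_comm
      _ ≤ ∑ k, (infNorm (W k) - W k i i) := by
          refine Finset.sum_le_sum fun k _ => ?_
          have hfull : ∑ p : Fin d × Fin n, |W k i p.1| * |D k r p.2|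
              = (∑ j, |W k i j|) * |D k r r| := by
            rw [Fintype.sum_prod_type, ← hDsum k, Finset.sum_mul]
            exact Finset.sum_congr rfl fun j _ => by rw [Finset.mul_sum]
          have herase : ∑ p ∈ Finset.univ.erase (i, r), |W k i p.1| * |D k r p.2|
              = (∑ j, |W k i j|) * |D k r r| - |W k i i| * |D k r r| := by
            have := Finset.sum_erase_add Finset.univ
              (fun p : Fin d × Fin n => |W k i p.1| * |D k r p.2|) (Finset.mem_univ (i, r))
            simp only [] at this
            rw [hfull] at this
            linarith [this]
          rw [herase, abs_of_nonneg (hWdiag k i), ← sub_mul]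
          have h1 : (∑ j, |W k i j|) - W k i i ≤ infNorm (W k) - W k i i :=
            sub_le_sub_right (rowSum_le_infNorm _ _) _
          have h2 : ((∑ j, |W k i j|) - W k i i) * |D k r r|
              ≤ ((∑ j, |W k i j|) - W k i i) * 1 :=
            mul_le_mul_of_nonneg_left (hDrr k) (by linarith [hWii_le k])
          linarith
  -- bound the diagonal term from below
  have ht : |∑ k, W k i i * D k r r| ≤ ∑ k, W k i i := by
    refine (Finset.abs_sum_le_sum_abs _ _).trans (Finset.sum_le_sum fun k _ => ?_)
    rw [abs_mul, abs_of_nonneg (hWdiag k i)]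
    calc W k i i * |D k r r| ≤ W k i i * 1 :=
          mul_le_mul_of_nonneg_left (hDrr k) (hWdiag k i)
      _ = W k i i := mul_one _
  have hdiag : 1 - ∑ k, W k i i ≤ |1 - ∑ k, W k i i * D k r r| := by
    have := abs_sub_abs_le_abs_sub (1 : ℝ) (∑ k, W k i i * D k r r)
    rw [abs_one] at this
    linarith
  have hWiisum : ∑ k, (W k i i : ℝ) ≤ ∑ k, infNorm (W k) :=
    Finset.sum_le_sum fun k _ => (hWii_le k).trans (rowSum_le_infNorm _ _)
  have hsplit : ∑ k, (infNorm (W k) - W k i i)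
      = (∑ k, infNorm (W k)) - ∑ k, W k i i := Finset.sum_sub_distrib _ _
  linarith
end

section
/- Let K₁ ≥ 1, and for k = 0,…,K₁−1 let D_k be an n×n real diagonal matrix with all diagonal entries in [−1,1] and W_k a d'×d' real matrix; assume ∑_{k=0}^{K₁−1} ‖W_kᵀ‖_∞ < 1. Let X be a fixed n×d real matrix, V₀ a d×d' real matrix, and for k = 1,…,K₂−1 let E_k be an n×n real diagonal matrix with diagonal entries in [−1,1] and V_k a d×d' real matrix. Define the recursion Y_{t+1} = ∑_{k=0}^{K₁−1} D_k Y_t W_k + X V₀ and O_{t+1} = Y_{t+1} + ∑_{k=1}^{K₂−1} E_k X V_k, starting from an arbitrary n×d' real matrix Y₀. Then: (a) there is a unique n×d' real matrix Y* satisfying Y* = ∑_{k=0}^{K₁−1} D_k Y* W_k + X V₀; (b) Y_t converges to Y* as t → ∞ (entrywise), regardless of Y₀; and (c) O_t converges to O* = Y* + ∑_{k=1}^{K₂−1} E_k X V_k. -/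
open scoped Matrix

attribute [local instance] Matrix.normedAddCommGroup

lemma infNorm_nonneg {m n : Type*} [Fintype m] [Fintype n]
    (A : Matrix m n ℝ) : 0 ≤ infNorm A :=
  Real.iSup_nonneg fun _ => Finset.sum_nonneg fun _ _ => abs_nonneg _

lemma colsum_le_infNorm {d' : ℕ} (W : Matrix (Fin d') (Fin d') ℝ) (j : Fin d') :
    ∑ l, |W l j| ≤ infNorm Wᵀ := by
  have h : ∑ l, |W l j| = ∑ l, |Wᵀ j l| := by simp [Matrix.transpose_apply]
  rw [h]
  exact le_ciSup (f := fun r => ∑ l, |Wᵀ r l|) (Set.Finite.bddAbove (Set.finite_range _)) j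

/-- Convergence of the spatio-temporal graph convolution recursion
`Y_{t+1} = ∑ k, D k * Y t * W k + X * V₀`,
`O_{t+1} = Y_{t+1} + ∑ k, E k * X * V k`:
if the `D k` (and `E k`) are diagonal with diagonal entries in `[-1,1]` and
`∑ k, ‖(W k)ᵀ‖_∞ < 1`, then there is a unique fixed point `Y*`, the sequence
`Y t` converges to it entrywise from any initial `Y₀`, and `O t` converges to
`O* = Y* + ∑ k, E k * X * V k`. -/
theorem stgc_recursion_converges {n d d' K₁ K₂ : ℕ} (hK₁ : 1 ≤ K₁)
    (D : Fin K₁ → Matrix (Fin n) (Fin n) ℝ)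
    (hDdiag : ∀ k, (D k).IsDiag)
    (hDbound : ∀ k r, D k r r ∈ Set.Icc (-1 : ℝ) 1)
    (W : Fin K₁ → Matrix (Fin d') (Fin d') ℝ)
    (hW : ∑ k, infNorm ((W k)ᵀ) < 1)
    (X : Matrix (Fin n) (Fin d) ℝ) (V0 : Matrix (Fin d) (Fin d') ℝ)
    (E : Fin (K₂ - 1) → Matrix (Fin n) (Fin n) ℝ)
    (hEdiag : ∀ k, (E k).IsDiag)
    (hEbound : ∀ k r, E k r r ∈ Set.Icc (-1 : ℝ) 1)
    (V : Fin (K₂ - 1) → Matrix (Fin d) (Fin d') ℝ)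
    (Y O : ℕ → Matrix (Fin n) (Fin d') ℝ)
    (hY : ∀ t, Y (t + 1) = ∑ k, D k * Y t * W k + X * V0)
    (hO : ∀ t, O (t + 1) = Y (t + 1) + ∑ k, E k * X * V k) :
    ∃ Ystar : Matrix (Fin n) (Fin d') ℝ,
      (Ystar = ∑ k, D k * Ystar * W k + X * V0) ∧
      (∀ Z : Matrix (Fin n) (Fin d') ℝ,
        Z = ∑ k, D k * Z * W k + X * V0 → Z = Ystar) ∧
      (∀ i j, Filter.Tendsto (fun t => Y t i j) Filter.atTop (nhds (Ystar i j))) ∧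
      (∀ i j, Filter.Tendsto (fun t => O t i j) Filter.atTop
        (nhds ((Ystar + ∑ k, E k * X * V k) i j))) := by
  haveI : @CompleteSpace (Matrix (Fin n) (Fin d') ℝ)
      (@PseudoMetricSpace.toUniformSpace _ Matrix.normedAddCommGroup.toPseudoMetricSpace) := by
    exact (inferInstanceAs (CompleteSpace (Fin n → Fin d' → ℝ)))
  set K : ℝ := ∑ k, infNorm ((W k)ᵀ) with hKdef
  have hK0 : 0 ≤ K := Finset.sum_nonneg fun k _ => infNorm_nonneg _
  set f : Matrix (Fin n) (Fin d') ℝ → Matrix (Fin n) (Fin d') ℝ :=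
    fun M => ∑ k, D k * M * W k + X * V0 with hf
  -- entrywise bound on the linear part
  have hDP : ∀ (k : Fin K₁) (P : Matrix (Fin n) (Fin d') ℝ) (i : Fin n) (l : Fin d'),
      (D k * P) i l = D k i i * P i l := by
    intro k P i l
    rw [Matrix.mul_apply]
    exact Finset.sum_eq_single i
      (fun m _ hm => by rw [hDdiag k (Ne.symm hm), zero_mul])
      (fun h => absurd (Finset.mem_univ i) h)
  have key : ∀ M N : Matrix (Fin n) (Fin d') ℝ, dist (f M) (f N) ≤ K * dist M N := by
    intro M N
    rw [dist_eq_norm, dist_eq_norm]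
    have hsub : f M - f N = ∑ k, D k * (M - N) * W k := by
      have h1 : ∀ k : Fin K₁, D k * (M - N) * W k = D k * M * W k - D k * N * W k := by
        intro k; rw [Matrix.mul_sub, Matrix.sub_mul]
      simp only [hf, h1, Finset.sum_sub_distrib]
      abel
    rw [hsub]
    refine (Matrix.norm_le_iff (mul_nonneg hK0 (norm_nonneg _))).2 fun i j => ?_
    have hentry : ∀ k : Fin K₁,
        |(D k * (M - N) * W k) i j| ≤ ‖M - N‖ * infNorm ((W k)ᵀ) := by
      intro k
      have : (D k * (M - N) * W k) i j = ∑ l, D k i i * (M - N) i l * W k l j := by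
        rw [Matrix.mul_apply]
        exact Finset.sum_congr rfl fun l _ => by rw [hDP]
      rw [this]
      calc |∑ l, D k i i * (M - N) i l * W k l j|
          ≤ ∑ l, |D k i i * (M - N) i l * W k l j| := Finset.abs_sum_le_sum_abs _ _
        _ ≤ ∑ l, ‖M - N‖ * |W k l j| := by
            refine Finset.sum_le_sum fun l _ => ?_
            rw [abs_mul, abs_mul]
            have hD1 : |D k i i| ≤ 1 := abs_le.2 ⟨(hDbound k i).1, (hDbound k i).2⟩
            have hMN : |(M - N) i l| ≤ ‖M - N‖ :=
              Matrix.norm_entry_le_entrywise_sup_norm (M - N)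
            calc |D k i i| * |(M - N) i l| * |W k l j|
                ≤ 1 * ‖M - N‖ * |W k l j| := by
                  apply mul_le_mul_of_nonneg_right _ (abs_nonneg _)
                  exact mul_le_mul hD1 hMN (abs_nonneg _) zero_le_one
              _ = ‖M - N‖ * |W k l j| := by ring
        _ = ‖M - N‖ * ∑ l, |W k l j| := by rw [Finset.mul_sum]
        _ ≤ ‖M - N‖ * infNorm ((W k)ᵀ) :=
            mul_le_mul_of_nonneg_left (colsum_le_infNorm _ j) (norm_nonneg _)
    calc ‖(∑ k, D k * (M - N) * W k) i j‖
        = |∑ k, (D k * (M - N) * W k) i j| := by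
          simp [Matrix.sum_apply]
      _ ≤ ∑ k, |(D k * (M - N) * W k) i j| := Finset.abs_sum_le_sum_abs _ _
      _ ≤ ∑ k, ‖M - N‖ * infNorm ((W k)ᵀ) := Finset.sum_le_sum fun k _ => hentry k
      _ = K * ‖M - N‖ := by rw [← Finset.mul_sum, hKdef, mul_comm]
  have hlip : LipschitzWith ⟨K, hK0⟩ f := LipschitzWith.of_dist_le_mul key
  have hcontr : ContractingWith ⟨K, hK0⟩ f := by
    refine ⟨?_, hlip⟩
    exact NNReal.coe_lt_coe.1 (show ((⟨K, hK0⟩ : NNReal) : ℝ) < ((1 : NNReal) : ℝ) from hW)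
  set Ystar := hcontr.fixedPoint f with hYstar
  have hfix : f Ystar = Ystar := hcontr.fixedPoint_isFixedPt
  have hiter : ∀ t, Y t = f^[t] (Y 0) := by
    intro t
    induction t with
    | zero => rfl
    | succ t ih => rw [Function.iterate_succ_apply', ← ih, hY t]
  have htend : Filter.Tendsto Y Filter.atTop (nhds Ystar) := by
    have := hcontr.tendsto_iterate_fixedPoint (Y 0)
    exact (Filter.tendsto_congr fun t => (hiter t).symm).1 this
  have hentrytend : ∀ i j,
      Filter.Tendsto (fun t => Y t i j) Filter.atTop (nhds (Ystar i j)) := by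
    intro i j
    have hc : Continuous fun M : Matrix (Fin n) (Fin d') ℝ => M i j :=
      (continuous_apply j).comp (continuous_apply i)
    exact (hc.tendsto Ystar).comp htend
  refine ⟨Ystar, hfix.symm, ?_, hentrytend, ?_⟩
  · intro Z hZ
    exact hcontr.fixedPoint_unique hZ.symm
  · intro i j
    have h1 : Filter.Tendsto (fun t => O (t + 1) i j) Filter.atTop
        (nhds ((Ystar + ∑ k, E k * X * V k) i j)) := by
      have : ∀ t, O (t + 1) i j = Y (t + 1) i j + (∑ k, E k * X * V k) i j := by
        intro t; rw [hO t]; simp [Matrix.add_apply]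
      simp only [this, Matrix.add_apply]
      exact (hentrytend i j |>.comp (Filter.tendsto_add_atTop_nat 1)).add
        tendsto_const_nhds
    exact (Filter.tendsto_add_atTop_iff_nat 1).1 h1
end

section
/- Let K₁ ≥ 1, and for k = 0,…,K₁−1 let D_k be an n×n real diagonal matrix and w_k ∈ ℝ^d a vector; assume that for all i = 1,…,d and j = 1,…,n, |∑_{k=0}^{K₁−1} w_{k,i} (D_k)_{jj}| < 1. Let X be a fixed n×d real matrix, v₀ ∈ ℝ^d, and for k = 1,…,K₂−1 let E_k be an n×n real diagonal matrix and v_k ∈ ℝ^d. Define the recursion Y_{t+1} = ∑_{k=0}^{K₁−1} D_k Y_t diag(w_k) + X diag(v₀) and O_{t+1} = Y_{t+1} + ∑_{k=1}^{K₂−1} E_k X diag(v_k), starting from an arbitrary n×d real matrix Y₀. Then for every entry (j,i), O_t(j,i) converges as t → ∞ to T_{ji} · X_{ji}, where T_{ji} = v_{0,i} / (1 − ∑_{k=0}^{K₁−1} w_{k,i} (D_k)_{jj}) + ∑_{k=1}^{K₂−1} (E_k)_{jj} v_{k,i}. -/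
lemma affine_recursion_tendsto (a c : ℝ) (ha : |a| < 1) (y : ℕ → ℝ)
    (hy : ∀ t, y (t + 1) = a * y t + c) :
    Filter.Tendsto y Filter.atTop (nhds (c / (1 - a))) := by
  have h1 : (1 : ℝ) - a ≠ 0 := by
    have := abs_lt.mp ha
    linarith
  set L := c / (1 - a) with hL
  have hfix : a * L + c = L := by
    rw [hL]
    field_simp
    ring
  have hform : ∀ t, y t = a ^ t * (y 0 - L) + L := by
    intro t
    induction t with
    | zero => simp
    | succ t ih =>
      rw [hy t, ih]
      have h : a * (a ^ t * (y 0 - L) + L) + c = a ^ (t + 1) * (y 0 - L) + (a * L + c) := by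
        ring
      rw [h, hfix]
  have hpow : Filter.Tendsto (fun t : ℕ => a ^ t) Filter.atTop (nhds 0) :=
    tendsto_pow_atTop_nhds_zero_of_abs_lt_one ha
  have : Filter.Tendsto (fun t : ℕ => a ^ t * (y 0 - L) + L) Filter.atTop
      (nhds (0 * (y 0 - L) + L)) :=
    ((hpow.mul_const _).add_const _)
  have h2 := this.congr (fun t => (hform t).symm)
  simpa using h2

/-- The signal-independent spatio-temporal graph convolution recursion
`Y_{t+1} = ∑ k, diag(dv k) * Y t * diag(w k) + X * diag(v₀)`,
`O_{t+1} = Y_{t+1} + ∑ k, diag(e k) * X * diag(v k)` converges entrywise: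
when `|∑ k, w k i * dv k j| < 1` for all `i, j`, each entry `O t j i` tends to
`T_{ji} * X j i` with
`T_{ji} = v₀ i / (1 - ∑ k, w k i * dv k j) + ∑ k, e k j * v k i`. -/
theorem stgc_independent_recursion_converges {n d K₁ K₂ : ℕ} (hK₁ : 1 ≤ K₁)
    (dv : Fin K₁ → Fin n → ℝ) (w : Fin K₁ → Fin d → ℝ)
    (hcontr : ∀ (i : Fin d) (j : Fin n), |∑ k, w k i * dv k j| < 1)
    (X : Matrix (Fin n) (Fin d) ℝ) (v0 : Fin d → ℝ)
    (e : Fin (K₂ - 1) → Fin n → ℝ) (v : Fin (K₂ - 1) → Fin d → ℝ)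
    (Y O : ℕ → Matrix (Fin n) (Fin d) ℝ)
    (hY : ∀ t, Y (t + 1) =
      ∑ k, Matrix.diagonal (dv k) * Y t * Matrix.diagonal (w k) +
        X * Matrix.diagonal v0)
    (hO : ∀ t, O (t + 1) = Y (t + 1) +
      ∑ k, Matrix.diagonal (e k) * X * Matrix.diagonal (v k)) :
    ∀ (j : Fin n) (i : Fin d),
      Filter.Tendsto (fun t => O t j i) Filter.atTop
        (nhds ((v0 i / (1 - ∑ k, w k i * dv k j) + ∑ k, e k j * v k i) * X j i)) := by
  intro j i
  set a : ℝ := ∑ k, w k i * dv k j with ha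
  set c : ℝ := X j i * v0 i with hc
  have hyrec : ∀ t, Y (t + 1) j i = a * Y t j i + c := by
    intro t
    have := congrFun (congrFun (hY t) j) i
    simp only [Matrix.add_apply, Matrix.sum_apply, Matrix.mul_diagonal,
      Matrix.diagonal_mul] at this
    rw [this, ha, hc, Finset.sum_mul]
    congr 1
    exact Finset.sum_congr rfl fun k _ => by ring
  have hYt : Filter.Tendsto (fun t => Y t j i) Filter.atTop (nhds (c / (1 - a))) :=
    affine_recursion_tendsto a c (hcontr i j) _ hyrec
  set S : ℝ := ∑ k, e k j * X j i * v k i with hS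
  have hOval : ∀ t, O (t + 1) j i = Y (t + 1) j i + S := by
    intro t
    have := congrFun (congrFun (hO t) j) i
    simpa only [Matrix.add_apply, Matrix.sum_apply, Matrix.mul_diagonal,
      Matrix.diagonal_mul] using this
  have hshift : Filter.Tendsto (fun t => O (t + 1) j i) Filter.atTop
      (nhds (c / (1 - a) + S)) := by
    have := (hYt.comp (Filter.tendsto_add_atTop_nat 1)).add_const S
    exact this.congr (fun t => (hOval t).symm)
  have hO' : Filter.Tendsto (fun t => O t j i) Filter.atTop (nhds (c / (1 - a) + S)) :=
    (Filter.tendsto_add_atTop_iff_nat 1).mp hshift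
  have heq : c / (1 - a) + S =
      (v0 i / (1 - a) + ∑ k, e k j * v k i) * X j i := by
    rw [hc, hS, add_mul, Finset.sum_mul]
    congr 1
    · ring
    · exact Finset.sum_congr rfl (fun k _ => by ring)
  rw [ha] at heq ⊢
  rw [heq] at hO'
  exact hO'
end
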